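/- Let F, G be non-constant polynomials over an algebraically closed field k, and suppose the affine curves C_F = closure of {(F₀(x),...,F_{n−1}(x)) : x ∈ k} and C_G = closure of {(G₀(x),...,G_{n−1}(x)) : x ∈ k} in kⁿ satisfy C_F = v − C_G for infinitely many vectors v ∈ kⁿ. Then the additive symmetry group H = {v ∈ kⁿ : C_F = v + C_F} is infinite, and being an algebraic subgroup of (kⁿ,+) of dimension at most 1 containing infinitely many points, H is a line through the origin; consequently C_F is a translate of a line. -/

import Mathlib

/-- The vanishing ideal of a subset of affine `n`-space over `k`. -/
noncomputable def vIdeal' {k : Type*} [Field k] {n : ℕ} (S : Set (Fin n → k)) :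
    Ideal (MvPolynomial (Fin n) k) where
  carrier := {p | ∀ x ∈ S, MvPolynomial.eval x p = 0}
  add_mem' := by
    intro a b ha hb x hx
    simp [map_add, ha x hx, hb x hx]
  zero_mem' := by
    intro x hx
    simp
  smul_mem' := by
    intro c p hp x hx
    simp [smul_eq_mul, hp x hx]

/-- The Zariski closure of a subset of affine `n`-space: the zero set of its vanishing
ideal. -/
def zcl {k : Type*} [Field k] {n : ℕ} (S : Set (Fin n → k)) : Set (Fin n → k) :=
  {x | ∀ p ∈ vIdeal' S, MvPolynomial.eval x p = 0}

namespace Stmt16Aux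

open Polynomial

variable {k : Type*} [Field k] {n : ℕ}

lemma mem_vIdeal' {S : Set (Fin n → k)} {p : MvPolynomial (Fin n) k} :
    p ∈ vIdeal' S ↔ ∀ x ∈ S, MvPolynomial.eval x p = 0 := Iff.rfl

lemma subset_zcl (S : Set (Fin n → k)) : S ⊆ zcl S := fun x hx p hp => hp x hx

lemma coeff_fin_sum {N : ℕ} (a : Fin N → k) (j : Fin N) :
    (∑ i : Fin N, Polynomial.C (a i) * Polynomial.X ^ (i : ℕ)).coeff (j : ℕ) = a j := by
  rw [Polynomial.finset_sum_coeff, Finset.sum_eq_single j]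
  · simp
  · intro i _ hne
    simp only [Polynomial.coeff_C_mul, Polynomial.coeff_X_pow]
    rw [if_neg (by simpa [Fin.val_eq_val] using (Ne.symm hne))]
    ring
  · simp

lemma eval_fin_sum {N : ℕ} (a : Fin N → k) (v : k) :
    (∑ i : Fin N, Polynomial.C (a i) * Polynomial.X ^ (i : ℕ)).eval v
      = ∑ i : Fin N, a i * v ^ (i : ℕ) := by
  simp [Polynomial.eval_finset_sum]

lemma coeffs_zero [Infinite k] (f : Polynomial k) (hf : f ≠ 0) (hf0 : f.eval 0 = 0)
    (N : ℕ) (c : Fin N × Fin N → k)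
    (hvan : ∀ x v : k,
      ∑ ij : Fin N × Fin N, c ij * (f.eval x) ^ (ij.1 : ℕ) * v ^ (ij.2 : ℕ) = 0) :
    ∀ ij, c ij = 0 := by
  -- h j := ∑ i, C (c (i,j)) * X^i
  set h : Fin N → Polynomial k := fun j => ∑ i : Fin N, Polynomial.C (c (i, j)) * Polynomial.X ^ (i : ℕ) with hh
  have key : ∀ j : Fin N, ∀ x : k, (h j).eval (f.eval x) = 0 := by
    intro j x
    have hψ : (∑ j' : Fin N, Polynomial.C ((h j').eval (f.eval x)) * Polynomial.X ^ (j' : ℕ)) = 0 := by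
      apply Polynomial.funext
      intro v
      rw [eval_fin_sum]
      simp only [Polynomial.eval_zero]
      have := hvan x v
      rw [Fintype.sum_prod_type] at this
      rw [Finset.sum_comm] at this
      calc ∑ j' : Fin N, (h j').eval (f.eval x) * v ^ (j' : ℕ)
          = ∑ j' : Fin N, ∑ i : Fin N, c (i, j') * (f.eval x) ^ (i : ℕ) * v ^ (j' : ℕ) := by
            refine Finset.sum_congr rfl fun j' _ => ?_
            rw [hh, eval_fin_sum, Finset.sum_mul]
        _ = 0 := this
    have := congrArg (fun p => Polynomial.coeff p (j : ℕ)) hψ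
    simpa only [coeff_fin_sum, Polynomial.coeff_zero] using this
  intro ij
  obtain ⟨i, j⟩ := ij
  have hcomp : (h j).comp f = 0 := by
    apply Polynomial.funext
    intro x
    simp [Polynomial.eval_comp, key j x]
  rcases Polynomial.comp_eq_zero_iff.mp hcomp with h0 | ⟨_, hfc⟩
  · have := congrArg (fun p => Polynomial.coeff p (i : ℕ)) h0
    simpa only [hh, coeff_fin_sum, Polynomial.coeff_zero] using this
  · exfalso
    apply hf
    have : f.coeff 0 = 0 := by
      have := hf0
      rw [hfc] at this ⊢
      simpa using this
    rw [hfc, this, map_zero]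

end Stmt16Aux

namespace Stmt16Aux

variable {k : Type*} [Field k]

lemma dep (f g : Polynomial k) :
    ∃ N : ℕ, ∃ c : Fin N × Fin N → k, (∃ ij, c ij ≠ 0) ∧
      ∑ ij : Fin N × Fin N, c ij • (f ^ (ij.1 : ℕ) * g ^ (ij.2 : ℕ)) = 0 := by
  set s := f.natDegree + g.natDegree with hs
  set N := s + 2 with hN
  set b := (s + 1) * s + 1 with hb
  have hmem : ∀ ij : Fin N × Fin N,
      f ^ (ij.1 : ℕ) * g ^ (ij.2 : ℕ) ∈ Polynomial.degreeLT k b := by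
    intro ⟨i, j⟩
    rw [Polynomial.mem_degreeLT]
    by_cases h : f ^ (i : ℕ) * g ^ (j : ℕ) = 0
    · rw [h, Polynomial.degree_zero]
      exact WithBot.bot_lt_coe b
    · rw [Polynomial.degree_eq_natDegree h]
      have hnd : (f ^ (i : ℕ) * g ^ (j : ℕ)).natDegree < b := by
        have h1 : (f ^ (i : ℕ) * g ^ (j : ℕ)).natDegree
            ≤ (i : ℕ) * f.natDegree + (j : ℕ) * g.natDegree :=
          le_trans (Polynomial.natDegree_mul_le)
            (add_le_add (Polynomial.natDegree_pow_le) (Polynomial.natDegree_pow_le))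
        have hi : (i : ℕ) ≤ s + 1 := Nat.lt_succ_iff.mp i.isLt
        have hj : (j : ℕ) ≤ s + 1 := Nat.lt_succ_iff.mp j.isLt
        have : (i : ℕ) * f.natDegree + (j : ℕ) * g.natDegree ≤ (s+1) * s := by
          calc (i : ℕ) * f.natDegree + (j : ℕ) * g.natDegree
              ≤ (s+1) * f.natDegree + (s+1) * g.natDegree :=
                add_le_add (Nat.mul_le_mul_right _ hi) (Nat.mul_le_mul_right _ hj)
            _ = (s+1) * s := by rw [hs]; ring
        omega
      exact_mod_cast hnd
  -- finite dimensionality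
  haveI : Module.Finite k (Polynomial.degreeLT k b) :=
    Module.Finite.equiv (Polynomial.degreeLTEquiv k b).symm
  have hfr : Module.finrank k (Polynomial.degreeLT k b) = b := by
    rw [(Polynomial.degreeLTEquiv k b).finrank_eq, Module.finrank_fin_fun]
  have hcard : Module.finrank k (Polynomial.degreeLT k b) < Fintype.card (Fin N × Fin N) := by
    rw [hfr, Fintype.card_prod, Fintype.card_fin]
    have : (s+1) * s + 1 < (s + 2) * (s + 2) := by nlinarith
    simpa [hb, hN] using this
  have hnli : ¬ LinearIndependent k
      (fun ij : Fin N × Fin N => (⟨_, hmem ij⟩ : Polynomial.degreeLT k b)) := by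
    intro hli
    exact absurd (hli.fintype_card_le_finrank) (not_le.mpr hcard)
  rw [Fintype.not_linearIndependent_iff] at hnli
  obtain ⟨c, hsum, i0, hi0⟩ := hnli
  refine ⟨N, c, ⟨i0, hi0⟩, ?_⟩
  have := congrArg (Subtype.val) hsum
  simpa using this

variable {n : ℕ} [CharZero k]

lemma line_invariant {S : Set (Fin n → k)} (w : Fin n → k)
    (hH : ∀ m : ℕ, zcl S = (fun u => (m • w) + u) '' zcl S)
    {s : Fin n → k} (hs : s ∈ zcl S) (c : k) : s + c • w ∈ zcl S := by
  intro q hq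
  set r : Polynomial k := MvPolynomial.eval₂ (Polynomial.C : k →+* Polynomial k)
    (fun t => Polynomial.C (s t) + Polynomial.C (w t) * Polynomial.X) q with hrdef
  have hr : ∀ c : k, r.eval c = MvPolynomial.eval (fun t => s t + w t * c) q := by
    intro c
    have := MvPolynomial.eval₂_comp_left (Polynomial.evalRingHom c)
      (Polynomial.C : k →+* Polynomial k)
      (fun t => Polynomial.C (s t) + Polynomial.C (w t) * Polynomial.X) q
    rw [hrdef]
    show (Polynomial.evalRingHom c) _ = _
    rw [this]
    have h1 : (Polynomial.evalRingHom c).comp (Polynomial.C : k →+* Polynomial k)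
        = RingHom.id k := by ext a; simp
    rw [h1]
    have h2 : (⇑(Polynomial.evalRingHom c) ∘ fun t => Polynomial.C (s t) + Polynomial.C (w t) * Polynomial.X) = fun t => s t + w t * c := by
      funext t; simp
    rw [h2]
    rfl
  have hnat : ∀ m : ℕ, r.eval ((m : k)) = 0 := by
    intro m
    rw [hr]
    have hmem : (m • w) + s ∈ zcl S := by
      rw [hH m]; exact ⟨s, hs, rfl⟩
    have := hmem q hq
    have heq : (fun t => s t + w t * (m : k)) = m • w + s := by
      funext t; simp [mul_comm]; ring
    rw [heq]
    exact this
  have hr0 : r = 0 := by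
    apply Polynomial.eq_zero_of_infinite_isRoot
    apply Set.Infinite.mono (s := Set.range (Nat.cast : ℕ → k))
    · rintro _ ⟨m, rfl⟩; exact hnat m
    · exact Set.infinite_range_of_injective Nat.cast_injective
  have := hr c
  rw [hr0] at this
  simp only [Polynomial.eval_zero] at this
  rw [show (s + c • w) = (fun t => s t + w t * c) from by funext t; simp [mul_comm]]
  exact this.symm

lemma direction_vanish (F : Fin n → Polynomial k) (w : Fin n → k) (j0 : Fin n)
    (hw0 : w j0 ≠ 0)
    (hInv : ∀ s ∈ zcl {y : Fin n → k | ∃ x : k, y = fun i => (F i).eval x}, ∀ c : k,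
      s + c • w ∈ zcl {y : Fin n → k | ∃ x : k, y = fun i => (F i).eval x})
    (t : Fin n) :
    Polynomial.C (w j0) * (F t - Polynomial.C ((F t).eval 0))
      - Polynomial.C (w t) * (F j0 - Polynomial.C ((F j0).eval 0)) = 0 := by
  set S : Set (Fin n → k) := {y : Fin n → k | ∃ x : k, y = fun i => (F i).eval x} with hS
  set p : Fin n → k := fun t' => (F t').eval 0 with hp
  set f : Polynomial k := Polynomial.C (w j0) * (F t - Polynomial.C (p t))
    - Polynomial.C (w t) * (F j0 - Polynomial.C (p j0)) with hfdef
  by_contra hf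
  have hf0 : f.eval 0 = 0 := by simp [hfdef, hp]
  set g : Polynomial k := F j0 with hg
  obtain ⟨N, c, ⟨ij0, hij0⟩, hrel⟩ := dep f g
  set A : MvPolynomial (Fin n) k :=
    MvPolynomial.C (w j0) * (MvPolynomial.X t - MvPolynomial.C (p t))
      - MvPolynomial.C (w t) * (MvPolynomial.X j0 - MvPolynomial.C (p j0)) with hA
  set q : MvPolynomial (Fin n) k :=
    ∑ ij : Fin N × Fin N, MvPolynomial.C (c ij) * A ^ (ij.1 : ℕ)
      * (MvPolynomial.X j0) ^ (ij.2 : ℕ) with hq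
  have heval : ∀ y : Fin n → k, MvPolynomial.eval y q
      = ∑ ij : Fin N × Fin N, c ij * (w j0 * (y t - p t) - w t * (y j0 - p j0)) ^ (ij.1 : ℕ)
        * (y j0) ^ (ij.2 : ℕ) := by
    intro y
    rw [hq, map_sum]
    refine Finset.sum_congr rfl fun ij _ => ?_
    simp [hA]
  have hqI : q ∈ vIdeal' S := by
    intro y hy
    obtain ⟨x, rfl⟩ := hy
    rw [heval]
    have := congrArg (Polynomial.eval x) hrel
    rw [Polynomial.eval_finset_sum] at this
    simp only [Polynomial.eval_smul, smul_eq_mul, Polynomial.eval_mul, Polynomial.eval_pow,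
      Polynomial.eval_zero] at this
    calc ∑ ij : Fin N × Fin N,
          c ij * (w j0 * ((F t).eval x - p t) - w t * ((F j0).eval x - p j0)) ^ (ij.1 : ℕ)
            * ((F j0).eval x) ^ (ij.2 : ℕ)
        = ∑ ij : Fin N × Fin N, c ij * (f.eval x) ^ (ij.1 : ℕ) * (g.eval x) ^ (ij.2 : ℕ) := by
          refine Finset.sum_congr rfl fun ij _ => ?_
          rw [hfdef, hg]
          simp
      _ = 0 := by rw [← this]; exact Finset.sum_congr rfl fun ij _ => by ring
  have hvan : ∀ x v : k,
      ∑ ij : Fin N × Fin N, c ij * (f.eval x) ^ (ij.1 : ℕ) * v ^ (ij.2 : ℕ) = 0 := by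
    intro x v
    set cc : k := (v - (g.eval x)) / w j0 with hcc
    have hbase : (fun i => (F i).eval x) ∈ zcl S := subset_zcl S ⟨x, rfl⟩
    have hy : (fun i => (F i).eval x) + cc • w ∈ zcl S := hInv _ hbase cc
    have h0 := hy q hqI
    rw [heval] at h0
    have hyt : ∀ t' : Fin n, ((fun i => (F i).eval x) + cc • w) t'
        = (F t').eval x + cc * w t' := by intro t'; simp
    rw [← h0]
    refine Finset.sum_congr rfl fun ij _ => ?_
    rw [hyt, hyt]
    have e1 : w j0 * ((F t).eval x + cc * w t - p t) - w t * ((F j0).eval x + cc * w j0 - p j0)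
        = f.eval x := by rw [hfdef]; simp; ring
    have e2 : (F j0).eval x + cc * w j0 = v := by
      rw [hcc, hg]; field_simp; ring
    rw [e1, e2]
  exact hij0 (coeffs_zero f hf hf0 N c hvan ij0)

lemma zcl_eq_line (F : Fin n → Polynomial k) (w : Fin n → k) (hw : w ≠ 0)
    (hInv : ∀ s ∈ zcl {y : Fin n → k | ∃ x : k, y = fun i => (F i).eval x}, ∀ c : k,
      s + c • w ∈ zcl {y : Fin n → k | ∃ x : k, y = fun i => (F i).eval x}) :
    zcl {y : Fin n → k | ∃ x : k, y = fun i => (F i).eval x}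
      = Set.range (fun c : k => (fun t => (F t).eval 0) + c • w) := by
  set S : Set (Fin n → k) := {y : Fin n → k | ∃ x : k, y = fun i => (F i).eval x} with hS
  set p : Fin n → k := fun t' => (F t').eval 0 with hp
  obtain ⟨j0, hw0⟩ : ∃ j0, w j0 ≠ 0 := by
    by_contra h
    push_neg at h
    exact hw (funext h)
  have hpS : p ∈ S := ⟨0, rfl⟩
  apply Set.eq_of_subset_of_subset
  · intro y hy
    have hvan := direction_vanish F w j0 hw0 hInv
    have hval : ∀ t : Fin n, w j0 * (y t - p t) - w t * (y j0 - p j0) = 0 := by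
      intro t
      have hmem : (MvPolynomial.C (w j0) * (MvPolynomial.X t - MvPolynomial.C (p t))
          - MvPolynomial.C (w t) * (MvPolynomial.X j0 - MvPolynomial.C (p j0)) :
          MvPolynomial (Fin n) k) ∈ vIdeal' S := by
        intro y' hy'
        obtain ⟨x, rfl⟩ := hy'
        have := congrArg (Polynomial.eval x) (hvan t)
        simp only [Polynomial.eval_sub, Polynomial.eval_mul, Polynomial.eval_C,
          Polynomial.eval_zero] at this
        simpa using this
      have := hy _ hmem
      simpa using this
    refine ⟨(y j0 - p j0) / w j0, ?_⟩
    funext t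
    have := hval t
    simp only [Pi.add_apply, Pi.smul_apply, smul_eq_mul]
    field_simp
    linear_combination -this
  · rintro _ ⟨c, rfl⟩
    exact hInv p (subset_zcl S hpS) c

end Stmt16Aux


open Stmt16Aux in
/-- Let `C_F` and `C_G` be the Zariski closures of the parametrized curves
`x ↦ (F₀(x),…,F_{n−1}(x))` and `x ↦ (G₀(x),…,G_{n−1}(x))` in `kⁿ`, with the `F_i` (and
`G_i`) not all constant.  If `C_F = v − C_G` for infinitely many `v ∈ kⁿ`, then the additive
symmetry group `H = {v : C_F = v + C_F}` is infinite; being an algebraic subgroup of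
`(kⁿ,+)` of dimension at most one containing infinitely many points, it is a line through
the origin, and `C_F` is a translate of that line. -/
theorem stmt_16 {k : Type*} [Field k] [IsAlgClosed k] [CharZero k] (n : ℕ)
    (F G : Fin n → Polynomial k)
    (hF : ∃ i, 0 < (F i).natDegree) (hG : ∃ i, 0 < (G i).natDegree)
    (hsym : {v : Fin n → k |
        zcl {y : Fin n → k | ∃ x : k, y = fun i => (F i).eval x} =
          (fun u : Fin n → k => v - u) ''
            zcl {y : Fin n → k | ∃ x : k, y = fun i => (G i).eval x}}.Infinite) :
    {v : Fin n → k |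
        zcl {y : Fin n → k | ∃ x : k, y = fun i => (F i).eval x} =
          (fun u : Fin n → k => v + u) ''
            zcl {y : Fin n → k | ∃ x : k, y = fun i => (F i).eval x}}.Infinite ∧
    ∃ w : Fin n → k, w ≠ 0 ∧
      {v : Fin n → k |
          zcl {y : Fin n → k | ∃ x : k, y = fun i => (F i).eval x} =
            (fun u : Fin n → k => v + u) ''
              zcl {y : Fin n → k | ∃ x : k, y = fun i => (F i).eval x}} =
        Set.range (fun c : k => c • w) ∧
      ∃ v₀ : Fin n → k,
        zcl {y : Fin n → k | ∃ x : k, y = fun i => (F i).eval x} =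
          Set.range (fun c : k => v₀ + c • w) := by
  set S : Set (Fin n → k) := {y : Fin n → k | ∃ x : k, y = fun i => (F i).eval x} with hS
  set CF : Set (Fin n → k) := zcl S with hCF
  set CG : Set (Fin n → k) := zcl {y : Fin n → k | ∃ x : k, y = fun i => (G i).eval x} with hCG
  set H : Set (Fin n → k) := {v : Fin n → k | CF = (fun u : Fin n → k => v + u) '' CF} with hH
  -- differences of symmetry vectors lie in H
  have hdiff : ∀ v₁ ∈ {v : Fin n → k | CF = (fun u : Fin n → k => v - u) '' CG},
      ∀ v₂ ∈ {v : Fin n → k | CF = (fun u : Fin n → k => v - u) '' CG}, v₁ - v₂ ∈ H := by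
    intro v₁ h1 v₂ h2
    show CF = (fun u : Fin n → k => (v₁ - v₂) + u) '' CF
    calc CF = (fun u : Fin n → k => v₁ - u) '' CG := h1
      _ = (fun u : Fin n → k => (v₁ - v₂) + u) '' ((fun u : Fin n → k => v₂ - u) '' CG) := by
          rw [Set.image_image]
          refine Set.image_congr fun u _ => ?_
          abel
      _ = (fun u : Fin n → k => (v₁ - v₂) + u) '' CF := by rw [← h2]
  -- H is closed under addition and contains 0
  have hadd : ∀ v₁ ∈ H, ∀ v₂ ∈ H, v₁ + v₂ ∈ H := by
    intro v₁ h1 v₂ h2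
    show CF = (fun u : Fin n → k => (v₁ + v₂) + u) '' CF
    calc CF = (fun u : Fin n → k => v₁ + u) '' CF := h1
      _ = (fun u : Fin n → k => v₁ + u) '' ((fun u : Fin n → k => v₂ + u) '' CF) := by rw [← h2]
      _ = (fun u : Fin n → k => (v₁ + v₂) + u) '' CF := by
          rw [Set.image_image]
          refine Set.image_congr fun u _ => ?_
          abel
  -- extract two distinct symmetry vectors
  obtain ⟨v₁, h1, v₂, h2, hne⟩ := hsym.nontrivial
  set w : Fin n → k := v₁ - v₂ with hwdef
  have hw : w ≠ 0 := sub_ne_zero.mpr hne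
  have hwH : w ∈ H := hdiff v₁ h1 v₂ h2
  have h0H : (0 : Fin n → k) ∈ H := by
    show CF = (fun u : Fin n → k => 0 + u) '' CF
    simp
  have hmH : ∀ m : ℕ, (m • w) ∈ H := by
    intro m
    induction m with
    | zero => simpa using h0H
    | succ m ih =>
        have h' : (m + 1) • w = m • w + w := succ_nsmul w m
        rw [h']
        exact hadd _ ih _ hwH
  have hHline : ∀ m : ℕ, CF = (fun u : Fin n → k => (m • w) + u) '' CF := fun m => hmH m
  have hInv : ∀ s ∈ zcl S, ∀ c : k, s + c • w ∈ zcl S :=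
    fun s hs c => line_invariant w hHline hs c
  have hline : CF = Set.range (fun c : k => (fun t => (F t).eval 0) + c • w) :=
    zcl_eq_line F w hw hInv
  set p : Fin n → k := fun t => (F t).eval 0 with hp
  have hpC : p ∈ CF := subset_zcl S ⟨0, rfl⟩
  -- H equals the line through the origin
  have hHrange : H = Set.range (fun c : k => c • w) := by
    apply Set.eq_of_subset_of_subset
    · intro v hv
      have hvC : v + p ∈ CF := by
        rw [show CF = (fun u : Fin n → k => v + u) '' CF from hv]
        exact ⟨p, hpC, rfl⟩
      rw [hline] at hvC
      obtain ⟨c, hc⟩ := hvC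
      refine ⟨c, ?_⟩
      show c • w = v
      calc c • w = (p + c • w) - p := by abel
        _ = (v + p) - p := by rw [← hc]
        _ = v := by abel
    · rintro _ ⟨c, rfl⟩
      show CF = (fun u : Fin n → k => c • w + u) '' CF
      rw [hline]
      apply Set.eq_of_subset_of_subset
      · rintro _ ⟨c', rfl⟩
        exact ⟨p + (c' - c) • w, ⟨c' - c, rfl⟩, by funext t; simp; ring⟩
      · rintro _ ⟨_, ⟨c', rfl⟩, rfl⟩
        exact ⟨c + c', by funext t; simp; ring⟩
  constructor
  · rw [hHrange]
    exact Set.infinite_range_of_injective (smul_left_injective k hw)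
  · exact ⟨w, hw, hHrange, p, hline⟩
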